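/- For every real number x ≥ 1 and every plan with x tankloads in the single-jeep model, every state reached by the plan has jeep position at most F(x); that is, a single jeep with x tankloads of fuel at the desert border cannot get farther than F(x) into the desert. -/

import Mathlib

/-- A state of the single-jeep model: the jeep's position, the fuel in its
tank, and a finitely supported function recording the fuel in depots. -/
structure JeepState where
  pos : ℝ
  tank : ℝ
  depot : ℝ →₀ ℝ

/-- Admissible moves of the single-jeep model: either drive (consuming one
tankload per unit of distance), or transfer fuel between the tank and the
depot at the jeep's current position. -/
inductive JeepStep : JeepState → JeepState → Prop
  | drive (s : JeepState) (p' : ℝ)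
      (h : 0 ≤ s.tank - |p' - s.pos|) :
      JeepStep s ⟨p', s.tank - |p' - s.pos|, s.depot⟩
  | transfer (s : JeepState) (t' : ℝ) (D' : ℝ →₀ ℝ)
      (hcons : t' + D' s.pos = s.tank + s.depot s.pos)
      (ht0 : 0 ≤ t') (ht1 : t' ≤ 1)
      (hD : ∀ q, 0 ≤ D' q)
      (heq : ∀ q, q ≠ s.pos → D' q = s.depot q) :
      JeepStep s ⟨s.pos, t', D'⟩

/-- The initial state of a plan with `x` tankloads: the jeep is at `0` with an
empty tank, and `x` tankloads of fuel are stored at position `0`. -/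
noncomputable def jeepInit (x : ℝ) : JeepState :=
  ⟨0, 0, Finsupp.single 0 x⟩

/-- `F x = Σ_{k=1}^{⌈x⌉−1} 1/(2k−1) + (x − ⌈x⌉ + 1)/(2⌈x⌉ − 1)`. -/
noncomputable def F (x : ℝ) : ℝ :=
  (∑ k ∈ Finset.Icc 1 (⌈x⌉₊ - 1), 1 / (2 * (k : ℝ) - 1)) +
    (x - ⌈x⌉₊ + 1) / (2 * (⌈x⌉₊ : ℝ) - 1)

open Set MeasureTheory
open scoped ENNReal NNReal

namespace JeepAux

noncomputable def brt (y : ℝ) (p : ℝ × ℝ) : ℝ := max (p.1 ⊔ p.2 - (p.1 ⊓ p.2) ⊔ y) 0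
noncomputable def gf (y : ℝ) (segs : List (ℝ × ℝ)) : ℝ := (segs.map (brt y)).sum
noncomputable def Rcnt (y : ℝ) (segs : List (ℝ × ℝ)) : ℕ :=
  segs.countP (fun p => decide (p.1 < y ∧ y ≤ p.2))
noncomputable def Lcnt (y : ℝ) (segs : List (ℝ × ℝ)) : ℕ :=
  segs.countP (fun p => decide (p.2 < y ∧ y ≤ p.1))

lemma brt_split (y w : ℝ) (hyw : y ≤ w) (p : ℝ × ℝ) :
    brt y p = max ((p.1 ⊔ p.2) ⊓ w - (p.1 ⊓ p.2) ⊔ y) 0 + brt w p := by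
  unfold brt
  simp only [max_def, min_def]
  split_ifs <;> linarith

lemma list_map_sum_fin {α M : Type*} [AddCommMonoid M] (l : List α) (f : α → M) :
    (l.map f).sum = ∑ i : Fin l.length, f l[i] := by
  induction l with
  | nil => simp
  | cons a t ih =>
    show (List.map f (a :: t)).sum = ∑ i : Fin (t.length + 1), f ((a :: t)[(i : ℕ)]'(by simpa using i.isLt))
    rw [List.map_cons, List.sum_cons, ih, Fin.sum_univ_succ]
    simp

lemma cnt_le (v : ℝ) (segs : List (ℝ × ℝ)) :
    Rcnt v segs + Lcnt v segs ≤
      ((segs.map (fun p => if v ∈ Set.Ioc (p.1 ⊓ p.2) (p.1 ⊔ p.2) then (1:ℕ) else 0)).sum) := by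
  induction segs with
  | nil => simp [Rcnt, Lcnt]
  | cons a t ih =>
    rw [List.map_cons, List.sum_cons]
    have e1 : Rcnt v (a :: t) = Rcnt v t + (if a.1 < v ∧ v ≤ a.2 then 1 else 0) := by
      simp [Rcnt, List.countP_cons]
    have e2 : Lcnt v (a :: t) = Lcnt v t + (if a.2 < v ∧ v ≤ a.1 then 1 else 0) := by
      simp [Lcnt, List.countP_cons]
    have h1 : (if (a.1 < v ∧ v ≤ a.2) then (1:ℕ) else 0) +
        (if (a.2 < v ∧ v ≤ a.1) then (1:ℕ) else 0) ≤
        (if v ∈ Set.Ioc (a.1 ⊓ a.2) (a.1 ⊔ a.2) then (1:ℕ) else 0) := by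
      by_cases hA : a.1 < v ∧ v ≤ a.2
      · have hB : ¬(a.2 < v ∧ v ≤ a.1) := by
          rintro ⟨hb1, hb2⟩
          exact absurd (hA.1.trans_le hb2) (lt_irrefl _)
        have hm : v ∈ Set.Ioc (a.1 ⊓ a.2) (a.1 ⊔ a.2) :=
          ⟨lt_of_le_of_lt inf_le_left hA.1, le_trans hA.2 le_sup_right⟩
        simp [hA, hB, hm]
      · by_cases hB : a.2 < v ∧ v ≤ a.1
        · have hm : v ∈ Set.Ioc (a.1 ⊓ a.2) (a.1 ⊔ a.2) :=
            ⟨lt_of_le_of_lt inf_le_right hB.1, le_trans hB.2 le_sup_left⟩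
          simp [hA, hB, hm]
        · simp [hA, hB]
    rw [e1, e2]
    omega
  


lemma gf_sub (y w : ℝ) (hyw : y ≤ w) (segs : List (ℝ × ℝ)) :
    gf y segs - gf w segs
      = (segs.map (fun p => max ((p.1 ⊔ p.2) ⊓ w - (p.1 ⊓ p.2) ⊔ y) 0)).sum := by
  unfold gf
  induction segs with
  | nil => simp
  | cons a t ih =>
    simp only [List.map_cons, List.sum_cons]
    rw [brt_split y w hyw a] at *
    linarith

lemma strip (segs : List (ℝ × ℝ)) (y w : ℝ) (hyw : y ≤ w) (m : ℕ)
    (hc : ∀ v ∈ Set.Ioo y w, m ≤ Rcnt v segs + Lcnt v segs) :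
    (m : ℝ) * (w - y) ≤ gf y segs - gf w segs := by
  rw [gf_sub y w hyw segs]
  set n := segs.length with hn
  -- the family of intervals
  set A : Fin n → Set ℝ := fun i =>
    Set.Ioc ((segs[(i:ℕ)].1 ⊓ segs[(i:ℕ)].2) ⊔ y) ((segs[(i:ℕ)].1 ⊔ segs[(i:ℕ)].2) ⊓ w) with hA
  have hmap : (segs.map (fun p => max ((p.1 ⊔ p.2) ⊓ w - (p.1 ⊓ p.2) ⊔ y) 0)).sum
      = ∑ i : Fin n, (volume (A i)).toReal := by
    rw [list_map_sum_fin]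
    congr 1
    funext i
    rw [hA]
    rw [Real.volume_Ioc, ENNReal.toReal_ofReal']
    rfl
  rw [hmap]
  have hfin : ∀ i ∈ Finset.univ (α := Fin n), volume (A i) ≠ ⊤ := by
    intro i _
    rw [hA, Real.volume_Ioc]
    exact ENNReal.ofReal_ne_top
  rw [← ENNReal.toReal_sum hfin]
  have hsne : (∑ i : Fin n, volume (A i)) ≠ ⊤ := by
    rw [← lt_top_iff_ne_top]
    exact ENNReal.sum_lt_top.mpr (fun i hi => lt_top_iff_ne_top.mpr (hfin i hi))
  rw [← ENNReal.ofReal_le_iff_le_toReal hsne]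
  -- pass to the measure-theoretic bound
  have key : (m : ℝ≥0∞) * volume (Set.Ioo y w) ≤ ∑ i : Fin n, volume (A i) := by
    have hmeas : ∀ i : Fin n, Measurable fun v =>
        (Set.Ioc (segs[(i:ℕ)].1 ⊓ segs[(i:ℕ)].2) (segs[(i:ℕ)].1 ⊔ segs[(i:ℕ)].2)).indicator
          (fun _ => (1 : ℝ≥0∞)) v :=
      fun i => measurable_const.indicator measurableSet_Ioc
    calc (m : ℝ≥0∞) * volume (Set.Ioo y w)
        = ∫⁻ _ in Set.Ioo y w, (m : ℝ≥0∞) := (setLIntegral_const _ _).symm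
      _ ≤ ∫⁻ v in Set.Ioo y w, ∑ i : Fin n,
            (Set.Ioc (segs[(i:ℕ)].1 ⊓ segs[(i:ℕ)].2) (segs[(i:ℕ)].1 ⊔ segs[(i:ℕ)].2)).indicator
              (fun _ => (1 : ℝ≥0∞)) v := by
          apply setLIntegral_mono (Finset.measurable_sum _ (fun i _ => hmeas i))
          intro v hv
          have h1 := hc v hv
          have h2 := cnt_le v segs
          have h3 : (m : ℕ) ≤ (segs.map (fun p =>
              if v ∈ Set.Ioc (p.1 ⊓ p.2) (p.1 ⊔ p.2) then (1:ℕ) else 0)).sum := le_trans h1 h2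
          calc (m : ℝ≥0∞) ≤ ((segs.map (fun p =>
                if v ∈ Set.Ioc (p.1 ⊓ p.2) (p.1 ⊔ p.2) then (1:ℕ) else 0)).sum : ℕ) := by
                exact_mod_cast h3
            _ = ∑ i : Fin n, (Set.Ioc (segs[(i:ℕ)].1 ⊓ segs[(i:ℕ)].2)
                  (segs[(i:ℕ)].1 ⊔ segs[(i:ℕ)].2)).indicator (fun _ => (1 : ℝ≥0∞)) v := by
                rw [list_map_sum_fin]
                push_cast
                congr 1
                funext i
                simp [Set.indicator_apply]
      _ = ∑ i : Fin n, ∫⁻ v in Set.Ioo y w,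
            (Set.Ioc (segs[(i:ℕ)].1 ⊓ segs[(i:ℕ)].2) (segs[(i:ℕ)].1 ⊔ segs[(i:ℕ)].2)).indicator
              (fun _ => (1 : ℝ≥0∞)) v :=
          lintegral_finset_sum _ (fun i _ => hmeas i)
      _ ≤ ∑ i : Fin n, volume (A i) := by
          apply Finset.sum_le_sum
          intro i _
          rw [lintegral_indicator measurableSet_Ioc, setLIntegral_const,
            Measure.restrict_apply measurableSet_Ioc] at *
          simp only [one_mul]
          apply measure_mono
          rintro v ⟨⟨hv1, hv2⟩, hv3, hv4⟩
          exact ⟨sup_lt_iff.mpr ⟨hv1, hv3⟩, le_inf hv2 (le_of_lt hv4)⟩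
  refine le_trans (le_of_eq ?_) key
  rw [Real.volume_Ioo, ← ENNReal.ofReal_natCast m, ← ENNReal.ofReal_mul (by positivity)]

noncomputable def btot (p : ℝ × ℝ) : ℝ := p.1 ⊔ p.2 - p.1 ⊓ p.2

lemma brt_nonneg (y : ℝ) (p : ℝ × ℝ) : 0 ≤ brt y p := le_max_right _ _

lemma brt_le_btot (y : ℝ) (p : ℝ × ℝ) : brt y p ≤ btot p := by
  have h1 : p.1 ⊓ p.2 ≤ p.1 ⊓ p.2 ⊔ y := le_sup_left
  have h2 : p.1 ⊓ p.2 ≤ p.1 ⊔ p.2 := inf_le_sup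
  unfold brt btot
  apply max_le <;> linarith

lemma gf_nonneg (y : ℝ) (segs : List (ℝ × ℝ)) : 0 ≤ gf y segs := by
  unfold gf
  induction segs with
  | nil => simp
  | cons a t ih => simp only [List.map_cons, List.sum_cons]; have := brt_nonneg y a; linarith

lemma gf_cont (segs : List (ℝ × ℝ)) : Continuous fun y => gf y segs := by
  unfold gf
  induction segs with
  | nil => simpa using continuous_const
  | cons a t ih =>
    simp only [List.map_cons, List.sum_cons]
    exact ((continuous_const.sub (continuous_const.sup continuous_id)).max continuous_const).add ih

lemma gf_le_btot (y : ℝ) (segs : List (ℝ × ℝ)) : gf y segs ≤ (segs.map btot).sum := by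
  unfold gf
  induction segs with
  | nil => simp
  | cons a t ih =>
    simp only [List.map_cons, List.sum_cons]
    have := brt_le_btot y a
    linarith

/-- splitting a Finsupp sum at one point. -/
lemma fsum_split (D : ℝ →₀ ℝ) (a : ℝ) (f : ℝ → ℝ → ℝ)
    (h0 : ∀ q, f q 0 = 0) (hadd : ∀ q b c, f q (b + c) = f q b + f q c) :
    D.sum f = f a (D a) + (D.erase a).sum f := by
  conv_lhs => rw [← Finsupp.single_add_erase a D]
  rw [Finsupp.sum_add_index' h0 hadd, Finsupp.sum_single_index (h0 a)]

lemma fsum_transfer (D D' : ℝ →₀ ℝ) (a : ℝ) (h : ∀ q, q ≠ a → D' q = D q)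
    (f : ℝ → ℝ → ℝ) (h0 : ∀ q, f q 0 = 0) (hadd : ∀ q b c, f q (b + c) = f q b + f q c) :
    D'.sum f + f a (D a) = D.sum f + f a (D' a) := by
  have herase : D'.erase a = D.erase a := by
    ext q
    by_cases hq : q = a
    · simp [hq]
    · simp [Finsupp.erase_ne hq, h q hq]
  rw [fsum_split D' a f h0 hadd, fsum_split D a f h0 hadd, herase]
  ring

noncomputable def depotSum (D : ℝ →₀ ℝ) : ℝ := D.sum fun _ v => v
noncomputable def depotRight (y : ℝ) (D : ℝ →₀ ℝ) : ℝ := D.sum fun q v => if y ≤ q then v else 0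

lemma depotSum_nonneg (D : ℝ →₀ ℝ) (h : ∀ q, 0 ≤ D q) : 0 ≤ depotSum D :=
  Finset.sum_nonneg fun q _ => h q

lemma depotRight_nonneg (y : ℝ) (D : ℝ →₀ ℝ) (h : ∀ q, 0 ≤ D q) : 0 ≤ depotRight y D :=
  Finset.sum_nonneg fun q _ => by dsimp only; split_ifs; exacts [h q, le_refl 0]

lemma depotSum_transfer (D D' : ℝ →₀ ℝ) (a : ℝ) (h : ∀ q, q ≠ a → D' q = D q) :
    depotSum D' + D a = depotSum D + D' a :=
  fsum_transfer D D' a h _ (fun _ => rfl) (fun _ _ _ => rfl)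

lemma depotRight_transfer (D D' : ℝ →₀ ℝ) (a : ℝ) (y : ℝ) (h : ∀ q, q ≠ a → D' q = D q) :
    depotRight y D' + (if y ≤ a then D a else 0) = depotRight y D + (if y ≤ a then D' a else 0) :=
  fsum_transfer D D' a h _ (fun q => by simp) (fun q b c => by split_ifs <;> simp)

noncomputable def fuelRight (y : ℝ) (s : JeepState) : ℝ :=
  depotRight y s.depot + (if y ≤ s.pos then s.tank else 0)

/-- The master invariant along a plan with drive list `segs`. -/
def Inv (x : ℝ) (segs : List (ℝ × ℝ)) (s : JeepState) : Prop :=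
  0 ≤ s.tank ∧ s.tank ≤ 1 ∧ (∀ q, 0 ≤ s.depot q) ∧
  (segs.map btot).sum + s.tank + depotSum s.depot = x ∧
  (∀ y, 0 < y → fuelRight y s + gf y segs ≤ (Rcnt y segs : ℝ)) ∧
  (∀ y, 0 < y → (Rcnt y segs : ℤ) - (Lcnt y segs : ℤ) = if y ≤ s.pos then 1 else 0)

end JeepAux

namespace JeepAux

lemma brt_eq_mid (y : ℝ) (p : ℝ × ℝ) (h1 : p.1 ⊓ p.2 ≤ y) (h2 : y ≤ p.1 ⊔ p.2) :
    brt y p = p.1 ⊔ p.2 - y := by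
  unfold brt
  rw [sup_eq_right.mpr h1, max_eq_left (by linarith)]

lemma brt_eq_low (y : ℝ) (p : ℝ × ℝ) (h : y ≤ p.1 ⊓ p.2) : brt y p = btot p := by
  unfold brt btot
  rw [sup_eq_left.mpr h, max_eq_left (by simpa using inf_le_sup)]

lemma brt_eq_high (y : ℝ) (p : ℝ × ℝ) (h : p.1 ⊔ p.2 ≤ y) : brt y p = 0 := by
  unfold brt
  rw [sup_eq_right.mpr (le_trans inf_le_sup h), max_eq_right (by linarith)]

lemma brt_eq_mid' (y a c : ℝ) (h1 : a ⊓ c ≤ y) (h2 : y ≤ a ⊔ c) : brt y (a, c) = a ⊔ c - y :=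
  brt_eq_mid y (a, c) h1 h2

lemma brt_eq_low' (y a c : ℝ) (h : y ≤ a ⊓ c) : brt y (a, c) = a ⊔ c - a ⊓ c :=
  brt_eq_low y (a, c) h

lemma brt_eq_high' (y a c : ℝ) (h : a ⊔ c ≤ y) : brt y (a, c) = 0 :=
  brt_eq_high y (a, c) h

lemma btot_pair (a c : ℝ) : btot (a, c) = a ⊔ c - a ⊓ c := rfl

lemma gf_append (y : ℝ) (segs : List (ℝ × ℝ)) (q : ℝ × ℝ) :
    gf y (segs ++ [q]) = gf y segs + brt y q := by
  simp [gf]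

lemma btot_append (segs : List (ℝ × ℝ)) (q : ℝ × ℝ) :
    ((segs ++ [q]).map btot).sum = (segs.map btot).sum + btot q := by
  simp

lemma Rcnt_append (y : ℝ) (segs : List (ℝ × ℝ)) (q : ℝ × ℝ) :
    Rcnt y (segs ++ [q]) = Rcnt y segs + if q.1 < y ∧ y ≤ q.2 then 1 else 0 := by
  unfold Rcnt
  rw [List.countP_append]
  congr 1
  rw [show ([q] : List (ℝ × ℝ)) = q :: [] from rfl, List.countP_cons]
  simp

lemma Lcnt_append (y : ℝ) (segs : List (ℝ × ℝ)) (q : ℝ × ℝ) :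
    Lcnt y (segs ++ [q]) = Lcnt y segs + if q.2 < y ∧ y ≤ q.1 then 1 else 0 := by
  unfold Lcnt
  rw [List.countP_append]
  congr 1
  rw [show ([q] : List (ℝ × ℝ)) = q :: [] from rfl, List.countP_cons]
  simp

lemma reach (x : ℝ) (hx : 0 ≤ x) (s : JeepState)
    (hs : Relation.ReflTransGen JeepStep (jeepInit x) s) :
    ∃ segs, Inv x segs s := by
  induction hs with
  | refl =>
    refine ⟨[], le_refl _, zero_le_one, ?_, ?_, ?_, ?_⟩
    · intro q
      show 0 ≤ Finsupp.single (0:ℝ) x q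
      rw [Finsupp.single_apply]
      split_ifs <;> simp [hx]
    · show 0 + 0 + depotSum (Finsupp.single (0:ℝ) x) = x
      rw [depotSum, Finsupp.sum_single_index rfl]
      ring
    · intro y hy
      show depotRight y (Finsupp.single (0:ℝ) x) + (if y ≤ (0:ℝ) then (0:ℝ) else 0) + gf y [] ≤ _
      rw [depotRight, Finsupp.sum_single_index (by simp)]
      simp [gf, Rcnt, not_le.mpr hy]
    · intro y hy
      simp [Rcnt, Lcnt, jeepInit, not_le.mpr hy]
  | @tail b c hab hbc ih =>
    obtain ⟨segs, ht0, ht1, hD, hsum, hI2, hI3⟩ := ih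
    cases hbc with
    | drive p' hdr =>
      have habs : b.pos ⊔ p' - b.pos ⊓ p' = |p' - b.pos| := by
        rw [max_sub_min_eq_abs, abs_sub_comm]
      have hsl : b.pos ≤ b.pos ⊔ p' := le_sup_left
      have hsr : p' ≤ b.pos ⊔ p' := le_sup_right
      have hil : b.pos ⊓ p' ≤ b.pos := inf_le_left
      have hir : b.pos ⊓ p' ≤ p' := inf_le_right
      refine ⟨segs ++ [(b.pos, p')], by simpa using hdr, ?_, hD, ?_, ?_, ?_⟩
      · have := abs_nonneg (p' - b.pos); simp only; linarith
      · rw [btot_append, btot_pair]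
        show _ + (b.tank - |p' - b.pos|) + depotSum b.depot = x
        rw [← habs] at *
        linarith
      · intro y hy
        have h2 := hI2 y hy
        have hdr' : 0 ≤ b.tank - (b.pos ⊔ p' - b.pos ⊓ p') := by rw [habs]; exact hdr
        rw [gf_append, Rcnt_append]
        show depotRight y b.depot + (if y ≤ p' then b.tank - |p' - b.pos| else 0)
            + (gf y segs + brt y (b.pos, p')) ≤ _
        unfold fuelRight at h2
        rw [← habs]
        by_cases hya : y ≤ b.pos <;> by_cases hyp : y ≤ p'
        · simp only [if_pos hyp, if_pos hya] at h2 ⊢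
          rw [brt_eq_low' y _ _ (le_inf hya hyp)]
          rw [if_neg (by rintro ⟨h', _⟩; exact absurd hya (not_le.mpr h'))]
          push_cast
          linarith
        · push_neg at hyp
          simp only [if_neg (not_le.mpr hyp), if_pos hya] at h2 ⊢
          rw [brt_eq_mid' y _ _ (le_trans hir (le_of_lt hyp)) (le_trans hya hsl)]
          rw [if_neg (by rintro ⟨h', _⟩; exact absurd hya (not_le.mpr h'))]
          push_cast
          have hb : b.pos ⊔ p' = b.pos := sup_eq_left.mpr (le_of_lt (lt_of_lt_of_le hyp hya))
          have hi2 : b.pos ⊓ p' ≤ p' := hir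
          linarith
        · push_neg at hya
          simp only [if_pos hyp, if_neg (not_le.mpr hya)] at h2 ⊢
          rw [brt_eq_mid' y _ _ (le_trans hil (le_of_lt hya)) (le_trans hyp hsr)]
          rw [if_pos (⟨hya, hyp⟩ : b.pos < y ∧ y ≤ p')]
          push_cast
          linarith
        · push_neg at hya hyp
          simp only [if_neg (not_le.mpr hyp), if_neg (not_le.mpr hya)] at h2 ⊢
          rw [brt_eq_high' y _ _ (by rw [sup_le_iff]; exact ⟨le_of_lt hya, le_of_lt hyp⟩)]
          rw [if_neg (by rintro ⟨_, h'⟩; exact absurd h' (not_le.mpr hyp))]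
          push_cast
          linarith
      · intro y hy
        have h3 := hI3 y hy
        rw [Rcnt_append, Lcnt_append]
        show ((Rcnt y segs + if b.pos < y ∧ y ≤ p' then 1 else 0 : ℕ) : ℤ)
            - ((Lcnt y segs + if p' < y ∧ y ≤ b.pos then 1 else 0 : ℕ) : ℤ)
            = if y ≤ p' then 1 else 0
        by_cases hya : y ≤ b.pos <;> by_cases hyp : y ≤ p'
        · rw [if_neg (by rintro ⟨h', _⟩; exact absurd hya (not_le.mpr h')),
            if_neg (by rintro ⟨h', _⟩; exact absurd hyp (not_le.mpr h')), if_pos hyp]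
          rw [if_pos hya] at h3
          push_cast at h3 ⊢
          linarith
        · rw [if_neg (by rintro ⟨h', _⟩; exact absurd hya (not_le.mpr h')),
            if_pos ⟨not_le.mp hyp, hya⟩, if_neg hyp]
          rw [if_pos hya] at h3
          push_cast at h3 ⊢
          linarith
        · rw [if_pos ⟨not_le.mp hya, hyp⟩,
            if_neg (by rintro ⟨_, h'⟩; exact absurd h' hya), if_pos hyp]
          rw [if_neg hya] at h3
          push_cast at h3 ⊢
          linarith
        · rw [if_neg (by rintro ⟨_, h'⟩; exact absurd h' hyp),
            if_neg (by rintro ⟨_, h'⟩; exact absurd h' hya), if_neg hyp]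
          rw [if_neg hya] at h3
          push_cast at h3 ⊢
          linarith
    | transfer t' D' hcons ht0' ht1' hD' heq =>
      refine ⟨segs, ht0', ht1', hD', ?_, ?_, ?_⟩
      · have hds := depotSum_transfer b.depot D' b.pos heq
        show (segs.map btot).sum + t' + depotSum D' = x
        linarith
      · intro y hy
        have h2 := hI2 y hy
        have hdr := depotRight_transfer b.depot D' b.pos y heq
        unfold fuelRight at *
        show depotRight y D' + (if y ≤ b.pos then t' else 0) + gf y segs ≤ _
        by_cases hya : y ≤ b.pos
        · simp only [if_pos hya] at h2 hdr ⊢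
          linarith
        · simp only [if_neg hya] at h2 hdr ⊢
          linarith
      · intro y hy
        exact hI3 y hy

end JeepAux

namespace JeepAux

noncomputable def aseq (k : ℕ) : ℝ := ∑ j ∈ Finset.Icc 1 k, 1 / (2 * (j : ℝ) - 1)

noncomputable def Fhat (u : ℝ) : ℝ := if 0 < u then F u else 0

lemma aseq_nonneg (k : ℕ) : 0 ≤ aseq k := by
  apply Finset.sum_nonneg
  intro j hj
  have h1 : (1 : ℝ) ≤ (j : ℝ) := by exact_mod_cast (Finset.mem_Icc.mp hj).1
  have : (0:ℝ) < 2 * (j:ℝ) - 1 := by linarith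
  positivity

lemma aseq_mono {j k : ℕ} (h : j ≤ k) : aseq j ≤ aseq k := by
  apply Finset.sum_le_sum_of_subset_of_nonneg (Finset.Icc_subset_Icc_right h)
  intro i hi _
  have h1 : (1 : ℝ) ≤ (i : ℝ) := by exact_mod_cast (Finset.mem_Icc.mp hi).1
  have : (0:ℝ) < 2 * (i:ℝ) - 1 := by linarith
  positivity

lemma aseq_succ (k : ℕ) : aseq (k + 1) = aseq k + 1 / (2 * ((k : ℝ) + 1) - 1) := by
  unfold aseq
  rw [Finset.sum_Icc_succ_top (by omega : 1 ≤ k + 1)]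
  push_cast
  ring

lemma ceil_mid (k : ℕ) (u : ℝ) (h1 : (k : ℝ) < u) (h2 : u ≤ (k : ℝ) + 1) : ⌈u⌉₊ = k + 1 := by
  rw [Nat.ceil_eq_iff (Nat.succ_ne_zero k)]
  constructor
  · simpa using h1
  · push_cast
    exact h2

lemma Fhat_mid (k : ℕ) (u : ℝ) (h1 : (k : ℝ) < u) (h2 : u ≤ (k : ℝ) + 1) :
    Fhat u = aseq k + (u - k) / (2 * (k : ℝ) + 1) := by
  have hu : 0 < u := lt_of_le_of_lt (Nat.cast_nonneg k) h1
  have hc := ceil_mid k u h1 h2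
  rw [Fhat, if_pos hu, F, hc]
  have he : k + 1 - 1 = k := rfl
  rw [he]
  congr 1
  push_cast
  ring_nf

lemma Fhat_nat (k : ℕ) : Fhat (k : ℝ) = aseq k := by
  cases k with
  | zero => simp [Fhat, aseq]
  | succ n =>
    rw [aseq_succ]
    push_cast
    rw [Fhat_mid n ((n:ℝ)+1) (by linarith) (le_refl _)]
    rw [show ((n:ℝ) + 1 - (n:ℝ)) = 1 from by ring, show 2*((n:ℝ)+1)-1 = 2*(n:ℝ)+1 from by ring]

lemma Fhat_nonneg (u : ℝ) : 0 ≤ Fhat u := by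
  unfold Fhat
  split_ifs with hu
  · rw [F]
    have h1 := aseq_nonneg (⌈u⌉₊ - 1)
    have hm1 : 1 ≤ ⌈u⌉₊ := Nat.one_le_ceil_iff.mpr hu
    have hc1 : (1:ℝ) ≤ (⌈u⌉₊:ℝ) := by exact_mod_cast hm1
    have hnum : 0 ≤ u - ⌈u⌉₊ + 1 := by
      have : (⌈u⌉₊:ℝ) < u + 1 := Nat.ceil_lt_add_one (le_of_lt hu)
      linarith
    have hd : (0:ℝ) < 2 * (⌈u⌉₊:ℝ) - 1 := by linarith
    have h2 := div_nonneg hnum (le_of_lt hd)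
    exact add_nonneg h1 h2
  · exact le_refl 0

lemma Fhat_le_aseq_ceil (u : ℝ) (hu : 0 < u) : Fhat u ≤ aseq ⌈u⌉₊ := by
  have hm : 1 ≤ ⌈u⌉₊ := Nat.one_le_ceil_iff.mpr hu
  obtain ⟨n, hn⟩ : ∃ n, ⌈u⌉₊ = n + 1 := ⟨⌈u⌉₊ - 1, (Nat.succ_pred_eq_of_pos hm).symm⟩
  have hle : u ≤ (⌈u⌉₊ : ℝ) := Nat.le_ceil u
  have hgt : ((⌈u⌉₊ : ℝ) - 1) < u := by
    have := Nat.ceil_lt_add_one (le_of_lt hu)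
    have h2 : (⌈u⌉₊ : ℝ) < u + 1 := this
    linarith
  have : Fhat u = aseq n + (u - n) / (2 * (n : ℝ) + 1) := by
    apply Fhat_mid n u
    · rw [hn] at hgt; push_cast at hgt; linarith
    · rw [hn] at hle; push_cast at hle; linarith
  rw [this, hn, aseq_succ]
  have hd : (0:ℝ) < 2 * (n:ℝ) + 1 := by positivity
  have hnum : u - n ≤ 1 := by rw [hn] at hle; push_cast at hle; linarith
  have h3 : (u - n) / (2 * (n:ℝ) + 1) ≤ 1 / (2 * (n:ℝ) + 1) :=
    (div_le_div_iff_of_pos_right hd).mpr hnum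
  rw [show 2*((n:ℝ)+1)-1 = 2*(n:ℝ)+1 from by ring]
  linarith

lemma aseq_pred_le_Fhat (u : ℝ) (hu : 0 < u) : aseq (⌈u⌉₊ - 1) ≤ Fhat u := by
  have hm : 1 ≤ ⌈u⌉₊ := Nat.one_le_ceil_iff.mpr hu
  obtain ⟨n, hn⟩ : ∃ n, ⌈u⌉₊ = n + 1 := ⟨⌈u⌉₊ - 1, (Nat.succ_pred_eq_of_pos hm).symm⟩
  have hle : u ≤ (⌈u⌉₊ : ℝ) := Nat.le_ceil u
  have hgt : ((⌈u⌉₊ : ℝ) - 1) < u := by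
    have h2 : (⌈u⌉₊ : ℝ) < u + 1 := Nat.ceil_lt_add_one (le_of_lt hu)
    linarith
  have he : Fhat u = aseq n + (u - n) / (2 * (n : ℝ) + 1) := by
    apply Fhat_mid n u
    · rw [hn] at hgt; push_cast at hgt; linarith
    · rw [hn] at hle; push_cast at hle; linarith
  rw [he, hn]
  have hd : (0:ℝ) < 2 * (n:ℝ) + 1 := by positivity
  have hnum : 0 ≤ u - n := by rw [hn] at hgt; push_cast at hgt; linarith
  have : 0 ≤ (u - n) / (2 * (n:ℝ) + 1) := div_nonneg hnum (le_of_lt hd)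
  have he2 : (n + 1 : ℕ) - 1 = n := rfl
  rw [he2]
  linarith

lemma Fhat_mono {u v : ℝ} (h0 : 0 ≤ u) (huv : u ≤ v) : Fhat u ≤ Fhat v := by
  by_cases hu : 0 < u
  · have hv : 0 < v := lt_of_lt_of_le hu huv
    have hm : ⌈u⌉₊ ≤ ⌈v⌉₊ := Nat.ceil_mono huv
    rcases eq_or_lt_of_le hm with heq | hlt
    · rw [Fhat, if_pos hu, Fhat, if_pos hv, F, F, ← heq]
      have hm1 : 1 ≤ ⌈u⌉₊ := Nat.one_le_ceil_iff.mpr hu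
      have hd : (0:ℝ) < 2 * (⌈u⌉₊:ℝ) - 1 := by
        have : (1:ℝ) ≤ (⌈u⌉₊:ℝ) := by exact_mod_cast hm1
        linarith
      have h3 : (u - (⌈u⌉₊:ℝ) + 1) / (2 * (⌈u⌉₊:ℝ) - 1) ≤ (v - (⌈u⌉₊:ℝ) + 1) / (2 * (⌈u⌉₊:ℝ) - 1) :=
        (div_le_div_iff_of_pos_right hd).mpr (by linarith)
      linarith
    · calc Fhat u ≤ aseq ⌈u⌉₊ := Fhat_le_aseq_ceil u hu
        _ ≤ aseq (⌈v⌉₊ - 1) := aseq_mono (by omega)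
        _ ≤ Fhat v := aseq_pred_le_Fhat v hv
  · have hu0 : u = 0 := le_antisymm (not_lt.mp hu) h0
    rw [hu0, show Fhat 0 = 0 from by simp [Fhat]]
    exact Fhat_nonneg v

end JeepAux


/- For every `x ≥ 1`, every state reached by a plan with `x` tankloads has
jeep position at most `F x`. -/
open JeepAux in
theorem jeep_oneway_bound (x : ℝ) (hx : 1 ≤ x) (s : JeepState)
    (hs : Relation.ReflTransGen JeepStep (jeepInit x) s) :
    s.pos ≤ F x := by
  classical
  obtain ⟨segs, ht0, ht1, hD, hsum, hI2, hI3⟩ := JeepAux.reach x (by linarith) s hs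
  have hFxF : Fhat x = F x := if_pos (by linarith : (0:ℝ) < x)
  by_cases hd : 0 < s.pos
  swap
  · have := Fhat_nonneg x
    rw [hFxF] at this
    linarith [not_lt.mp hd]
  have hg0x : gf 0 segs ≤ x := by
    have h1 := gf_le_btot 0 segs
    have h2 := depotSum_nonneg s.depot hD
    linarith
  have hcb : ∀ v, 0 < v → v ≤ s.pos → ∀ k : ℕ, (k:ℝ) < gf v segs →
      2*k+1 ≤ Rcnt v segs + Lcnt v segs := by
    intro v hv hvd k hk
    have h2 := hI2 v hv
    have h3 := hI3 v hv
    rw [if_pos hvd] at h3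
    have hfr : 0 ≤ fuelRight v s := by
      unfold fuelRight
      have := depotRight_nonneg v s.depot hD
      split_ifs <;> linarith
    have hgR : gf v segs ≤ (Rcnt v segs : ℝ) := by linarith
    have hkR : (k:ℝ) < (Rcnt v segs : ℝ) := lt_of_lt_of_le hk hgR
    have hkR' : k < Rcnt v segs := by exact_mod_cast hkR
    omega
  have hone : ∀ v, 0 < v → v ≤ s.pos → 1 ≤ Rcnt v segs + Lcnt v segs := by
    intro v hv hvd
    have h3 := hI3 v hv
    rw [if_pos hvd] at h3
    omega
  have claim : ∀ k : ℕ, ∀ y : ℝ, 0 ≤ y → y ≤ s.pos → gf y segs ≤ (k:ℝ) →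
      s.pos - y ≤ Fhat (gf y segs) := by
    intro k
    induction k with
    | zero =>
      intro y hy0 hyd hgk
      have hg0 : gf y segs = 0 := le_antisymm (by simpa using hgk) (gf_nonneg y segs)
      rw [hg0, show Fhat 0 = 0 from by simp [Fhat]]
      by_contra hlt
      push_neg at hlt
      have hyd' : y < s.pos := by linarith
      have hstrip := strip segs y s.pos (le_of_lt hyd') 1
        (fun v hv => hone v (lt_of_le_of_lt hy0 hv.1) (le_of_lt hv.2))
      have := gf_nonneg s.pos segs
      push_cast at hstrip
      linarith
    | succ k ih =>
      intro y hy0 hyd hgk1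
      by_cases hk : gf y segs ≤ (k:ℝ)
      · exact ih y hy0 hyd hk
      push_neg at hk
      have h2k : (0:ℝ) < 2*(k:ℝ)+1 := by positivity
      set S : Set ℝ := Set.Icc y s.pos ∩ {w | gf w segs ≤ (k:ℝ)} with hSdef
      by_cases hSne : S.Nonempty
      · have hclosed : IsClosed S := isClosed_Icc.inter (isClosed_le (gf_cont segs) continuous_const)
        have hbdd : BddBelow S := ⟨y, fun w hw => hw.1.1⟩
        set z := sInf S with hz
        have hzS : z ∈ S := hclosed.csInf_mem hSne hbdd
        have hyz : y < z := by
          rcases lt_or_eq_of_le hzS.1.1 with h | h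
          · exact h
          · exfalso; rw [← h] at hzS; exact absurd hzS.2 (not_le.mpr hk)
        have hnotS : ∀ w, y < w → w < z → (k:ℝ) < gf w segs := by
          intro w h1 h2
          by_contra hle
          push_neg at hle
          have hw : w ∈ S := ⟨⟨le_of_lt h1, le_trans (le_of_lt h2) hzS.1.2⟩, hle⟩
          exact absurd (csInf_le hbdd hw) (not_le.mpr h2)
        have hgz : gf z segs = (k:ℝ) := by
          refine le_antisymm hzS.2 ?_
          have htd : Filter.Tendsto (fun w => gf w segs) (nhdsWithin z (Set.Iio z))
              (nhds (gf z segs)) := ((gf_cont segs).tendsto z).mono_left nhdsWithin_le_nhds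
          refine ge_of_tendsto htd ?_
          filter_upwards [Ioo_mem_nhdsLT_of_mem (⟨hyz, le_refl z⟩ : z ∈ Set.Ioc y z)] with w hw
          exact le_of_lt (hnotS w hw.1 hw.2)
        have hstrip := strip segs y z (le_of_lt hyz) (2*k+1)
          (fun v hv => hcb v (lt_of_le_of_lt hy0 hv.1)
            (le_trans (le_of_lt hv.2) hzS.1.2) k (hnotS v hv.1 hv.2))
        have hihz := ih z (le_trans hy0 (le_of_lt hyz)) hzS.1.2 (le_of_eq hgz)
        rw [hgz, Fhat_nat k] at hihz
        rw [Fhat_mid k (gf y segs) hk (by push_cast at hgk1 ⊢; linarith)]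
        push_cast at hstrip
        have hzy : z - y ≤ (gf y segs - k) / (2*(k:ℝ)+1) := by
          rw [le_div_iff₀ h2k]
          rw [hgz] at hstrip
          linarith
        linarith
      · have hall : ∀ w, y ≤ w → w ≤ s.pos → (k:ℝ) < gf w segs := by
          intro w h1 h2
          by_contra hle
          push_neg at hle
          exact hSne ⟨w, ⟨⟨h1, h2⟩, hle⟩⟩
        have hstrip := strip segs y s.pos hyd (2*k+1)
          (fun v hv => hcb v (lt_of_le_of_lt hy0 hv.1) (le_of_lt hv.2) k
            (hall v (le_of_lt hv.1) (le_of_lt hv.2)))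
        have hgd := hall s.pos hyd (le_refl _)
        rw [Fhat_mid k (gf y segs) hk (by push_cast at hgk1 ⊢; linarith)]
        push_cast at hstrip
        have hdy : s.pos - y ≤ (gf y segs - k)/(2*(k:ℝ)+1) := by
          rw [le_div_iff₀ h2k]
          linarith
        linarith [aseq_nonneg k]
  have hceil : gf 0 segs ≤ ((⌈x⌉₊ : ℕ) : ℝ) := le_trans hg0x (Nat.le_ceil x)
  have hmain := claim ⌈x⌉₊ 0 (le_refl 0) (le_of_lt hd) hceil
  have hmono := Fhat_mono (gf_nonneg 0 segs) hg0x
  rw [hFxF] at hmono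
  linarith
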